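/- arXiv:2407.07809 — 6 statements merged into one kernel-verified Lean document; each statement's English description precedes it below -/
import Mathlib

section
/- (Lemma 1, identifiability of Σ under UVC.) Let A be a q×p binding matrix with entries in {0,1}, let Σ = (σ_{lk}) be a p×p symmetric matrix, let Γ be a q×q diagonal matrix, and set C = (c_{ij}) = A Σ Aᵀ + Γ. For l ∈ {1,…,p}, let S_l = {j : the j-th row of A equals the l-th standard basis vector of ℝ^p}, and assume the unique-variable condition (UVC): |S_l| ≥ 2 for every l. Then Σ is uniquely determined from C and A by σ_{ll} = (|S_l|(|S_l|−1))^{-1} Σ_{i,j ∈ S_l, i≠j} c_{ij} for every l, and σ_{lk} = (|S_l||S_k|)^{-1} Σ_{i ∈ S_l, j ∈ S_k} c_{ij} for every l ≠ k. -/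
open Matrix Finset

noncomputable section

open scoped Classical in
/-- The set of unique lower-level variables of the `l`-th higher-level variable:
indices `j` whose row of `A` equals the `l`-th standard basis vector. -/
noncomputable def uniqueSet {q p : ℕ} (A : Matrix (Fin q) (Fin p) ℝ) (l : Fin p) :
    Finset (Fin q) :=
  Finset.univ.filter fun j => ∀ k, A j k = if k = l then 1 else 0

/-- Lemma 1, identifiability of Σ under UVC: if `C = A Σ Aᵀ + Γ` with `Γ`
diagonal and each unique set `S_l` has at least two elements, then `Σ` is determined from
`C` and `A` by `σ_{ll} = (|S_l|(|S_l|-1))⁻¹ ∑_{i,j ∈ S_l, i ≠ j} c_{ij}` and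
`σ_{lk} = (|S_l||S_k|)⁻¹ ∑_{i ∈ S_l, j ∈ S_k} c_{ij}` for `l ≠ k`. -/
theorem stmt2 {q p : ℕ} (A : Matrix (Fin q) (Fin p) ℝ)
    (hA : ∀ j k, A j k = 0 ∨ A j k = 1)
    (hUVC : ∀ l, 2 ≤ (uniqueSet A l).card)
    (Sig : Matrix (Fin p) (Fin p) ℝ) (hSig : Sig.IsSymm)
    (Γ : Matrix (Fin q) (Fin q) ℝ) (hΓ : Γ.IsDiag)
    (C : Matrix (Fin q) (Fin q) ℝ) (hC : C = A * Sig * Aᵀ + Γ) :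
    (∀ l : Fin p,
      Sig l l = (((uniqueSet A l).card : ℝ) * (((uniqueSet A l).card : ℝ) - 1))⁻¹ *
        ∑ i ∈ uniqueSet A l, ∑ j ∈ (uniqueSet A l).erase i, C i j) ∧
    (∀ l k : Fin p, l ≠ k →
      Sig l k = (((uniqueSet A l).card : ℝ) * ((uniqueSet A k).card : ℝ))⁻¹ *
        ∑ i ∈ uniqueSet A l, ∑ j ∈ uniqueSet A k, C i j) := by
  classical
  have hmem : ∀ (l : Fin p) (i : Fin q), i ∈ uniqueSet A l →
      ∀ k, A i k = if k = l then 1 else 0 := by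
    intro l i hi
    simpa [uniqueSet] using hi
  -- key: C i j = Sig l k for i ∈ S_l, j ∈ S_k, i ≠ j
  have key : ∀ (l k : Fin p) (i j : Fin q), i ∈ uniqueSet A l → j ∈ uniqueSet A k →
      i ≠ j → C i j = Sig l k := by
    intro l k i j hi hj hij
    have hΓ0 : Γ i j = 0 := hΓ hij
    have hAi := hmem l i hi
    have hAj := hmem k j hj
    have : (A * Sig * Aᵀ) i j = Sig l k := by
      simp only [Matrix.mul_apply, Matrix.transpose_apply, hAi, hAj]
      simp [ite_mul, mul_ite, Finset.sum_ite_eq', Finset.sum_ite_eq]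
    simp [hC, Matrix.add_apply, this, hΓ0]
  constructor
  · intro l
    have hcard := hUVC l
    have hsum : ∑ i ∈ uniqueSet A l, ∑ j ∈ (uniqueSet A l).erase i, C i j
        = ((uniqueSet A l).card : ℝ) * (((uniqueSet A l).card : ℝ) - 1) * Sig l l := by
      calc ∑ i ∈ uniqueSet A l, ∑ j ∈ (uniqueSet A l).erase i, C i j
          = ∑ i ∈ uniqueSet A l, ∑ j ∈ (uniqueSet A l).erase i, Sig l l := by
            refine Finset.sum_congr rfl fun i hi => Finset.sum_congr rfl fun j hj => ?_
            exact key l l i j hi (Finset.mem_of_mem_erase hj)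
              (fun h => (Finset.ne_of_mem_erase hj) h.symm)
        _ = ∑ i ∈ uniqueSet A l, (((uniqueSet A l).card - 1 : ℕ) : ℝ) * Sig l l := by
            refine Finset.sum_congr rfl fun i hi => ?_
            rw [Finset.sum_const, Finset.card_erase_of_mem hi, nsmul_eq_mul]
        _ = ((uniqueSet A l).card : ℝ) * (((uniqueSet A l).card : ℝ) - 1) * Sig l l := by
            rw [Finset.sum_const, nsmul_eq_mul]
            have : (((uniqueSet A l).card - 1 : ℕ) : ℝ) = ((uniqueSet A l).card : ℝ) - 1 := by
              have : 1 ≤ (uniqueSet A l).card := le_trans one_le_two hcard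
              push_cast [this]; ring
            rw [this]; ring
    have hne : ((uniqueSet A l).card : ℝ) * (((uniqueSet A l).card : ℝ) - 1) ≠ 0 := by
      have h2 : (2 : ℝ) ≤ ((uniqueSet A l).card : ℝ) := by exact_mod_cast hcard
      have h1 : (0 : ℝ) < ((uniqueSet A l).card : ℝ) - 1 := by linarith
      positivity
    rw [hsum]
    rw [inv_mul_cancel_left₀ hne]
  · intro l k hlk
    have hdisj : ∀ i, i ∈ uniqueSet A l → i ∈ uniqueSet A k → False := by
      intro i hil hik
      have h1 := hmem l i hil l
      have h2 := hmem k i hik l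
      rw [h1] at h2
      rw [if_neg hlk] at h2; norm_num at h2
    have hsum : ∑ i ∈ uniqueSet A l, ∑ j ∈ uniqueSet A k, C i j
        = ((uniqueSet A l).card : ℝ) * ((uniqueSet A k).card : ℝ) * Sig l k := by
      calc ∑ i ∈ uniqueSet A l, ∑ j ∈ uniqueSet A k, C i j
          = ∑ i ∈ uniqueSet A l, ∑ j ∈ uniqueSet A k, Sig l k := by
            refine Finset.sum_congr rfl fun i hi => Finset.sum_congr rfl fun j hj => ?_
            refine key l k i j hi hj fun h => hdisj i hi (h ▸ hj)
        _ = ((uniqueSet A l).card : ℝ) * ((uniqueSet A k).card : ℝ) * Sig l k := by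
            simp [Finset.sum_const, nsmul_eq_mul]; ring
    have hne : ((uniqueSet A l).card : ℝ) * ((uniqueSet A k).card : ℝ) ≠ 0 := by
      have h2 : (2 : ℝ) ≤ ((uniqueSet A l).card : ℝ) := by exact_mod_cast hUVC l
      have h3 : (2 : ℝ) ≤ ((uniqueSet A k).card : ℝ) := by exact_mod_cast hUVC k
      positivity
    rw [hsum]
    rw [inv_mul_cancel_left₀ hne]
end
end

section
/- (Unbiasedness of the direct estimator.) Let z₁,…,z_n be i.i.d. random vectors in ℝ^q with mean zero, square-integrable entries, and covariance matrix C = (c_{ij}) satisfying C = A Σ Aᵀ + Γ for a binding matrix A satisfying UVC, a p×p symmetric matrix Σ = (σ_{lk}), and a diagonal matrix Γ. Define ĉ_{jk} = n^{-1} Σ_{i=1}^n z_{ij} z_{ik}, and define the direct estimator σ̂_{ll} = (|S_l|(|S_l|−1))^{-1} Σ_{i,j ∈ S_l, i≠j} ĉ_{ij} and σ̂_{lk} = (|S_l||S_k|)^{-1} Σ_{i ∈ S_l, j ∈ S_k} ĉ_{ij} for l ≠ k. Then E[σ̂_{lk}] = σ_{lk} for all l, k ∈ {1,…,p}. -/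
open Matrix Finset MeasureTheory ProbabilityTheory

noncomputable section

/-- unbiasedness of the direct estimator: for i.i.d. mean-zero,
square-integrable `z₁, …, z_n` with covariance `C = A Σ Aᵀ + Γ` (`A` a binding matrix
satisfying UVC, `Γ` diagonal), the direct estimators
`σ̂_{ll} = (|S_l|(|S_l|-1))⁻¹ ∑_{i,j ∈ S_l, i≠j} ĉ_{ij}` and
`σ̂_{lk} = (|S_l||S_k|)⁻¹ ∑_{i ∈ S_l, j ∈ S_k} ĉ_{ij}` (with
`ĉ_{ij} = n⁻¹ ∑_m z_{mi} z_{mj}`) satisfy `E[σ̂_{lk}] = σ_{lk}` for all `l, k`. -/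
theorem stmt5 {Ω : Type*} [MeasurableSpace Ω] (μ : Measure Ω) [IsProbabilityMeasure μ]
    {q p n : ℕ} (hn : 0 < n)
    (A : Matrix (Fin q) (Fin p) ℝ) (hA : ∀ j k, A j k = 0 ∨ A j k = 1)
    (hUVC : ∀ l, 2 ≤ (uniqueSet A l).card)
    (Sig : Matrix (Fin p) (Fin p) ℝ) (hSig : Sig.IsSymm)
    (Γ : Matrix (Fin q) (Fin q) ℝ) (hΓ : Γ.IsDiag)
    (C : Matrix (Fin q) (Fin q) ℝ) (hC : C = A * Sig * Aᵀ + Γ)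
    (z : Fin n → Ω → Fin q → ℝ)
    (hmeas : ∀ m, Measurable (z m))
    (hindep : iIndepFun z μ)
    (hident : ∀ m m', IdentDistrib (z m) (z m') μ μ)
    (hmean : ∀ m j, ∫ ω, z m ω j ∂μ = 0)
    (hL2 : ∀ m j, MemLp (fun ω => z m ω j) 2 μ)
    (hcov : ∀ m i j, ∫ ω, z m ω i * z m ω j ∂μ = C i j) :
    (∀ l : Fin p,
      ∫ ω, (((uniqueSet A l).card : ℝ) * (((uniqueSet A l).card : ℝ) - 1))⁻¹ *
        ∑ i ∈ uniqueSet A l, ∑ j ∈ (uniqueSet A l).erase i,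
          ((n : ℝ)⁻¹ * ∑ m, z m ω i * z m ω j) ∂μ = Sig l l) ∧
    (∀ l k : Fin p, l ≠ k →
      ∫ ω, (((uniqueSet A l).card : ℝ) * ((uniqueSet A k).card : ℝ))⁻¹ *
        ∑ i ∈ uniqueSet A l, ∑ j ∈ uniqueSet A k,
          ((n : ℝ)⁻¹ * ∑ m, z m ω i * z m ω j) ∂μ = Sig l k) := by

  classical
  -- membership characterization
  have hmemA : ∀ {l : Fin p} {i : Fin q}, i ∈ uniqueSet A l →
      ∀ k' : Fin p, A i k' = if k' = l then 1 else 0 := by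
    intro l i hi k'
    simp only [uniqueSet, Finset.mem_filter] at hi
    exact hi.2 k'
  -- covariance value on unique sets
  have hCval : ∀ {l k : Fin p} {i j : Fin q}, i ∈ uniqueSet A l → j ∈ uniqueSet A k →
      i ≠ j → C i j = Sig l k := by
    intro l k i j hi hj hij
    have hAi := hmemA hi
    have hAj := hmemA hj
    have hG0 : Γ i j = 0 := hΓ hij
    rw [hC]
    simp only [Matrix.add_apply, Matrix.mul_apply, Matrix.transpose_apply, hG0, add_zero]
    have h1 : ∀ b : Fin p, (∑ a, A i a * Sig a b) = Sig l b := by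
      intro b
      rw [Finset.sum_eq_single l]
      · rw [hAi l]; simp
      · intro a _ ha; rw [hAi a]; simp [ha]
      · simp
    simp_rw [h1]
    rw [Finset.sum_eq_single k]
    · rw [hAj k]; simp
    · intro b _ hb; rw [hAj b]; simp [hb]
    · simp
  have hint : ∀ (m : Fin n) (i j : Fin q),
      Integrable (fun ω => z m ω i * z m ω j) μ :=
    fun m i j => by
      have h := (hL2 m j).smul (hL2 m i) (p := 2) (q := 2) (r := 1)
      simpa [Pi.smul_apply, smul_eq_mul, Pi.mul_def] using memLp_one_iff_integrable.mp h
  have hint2 : ∀ (i j : Fin q),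
      Integrable (fun ω => (n : ℝ)⁻¹ * ∑ m, z m ω i * z m ω j) μ :=
    fun i j => ((integrable_finset_sum _ fun m _ => hint m i j).const_mul _)
  have hnR : (n : ℝ) ≠ 0 := Nat.cast_ne_zero.mpr hn.ne'
  have inner : ∀ i j : Fin q,
      ∫ ω, (n : ℝ)⁻¹ * ∑ m, z m ω i * z m ω j ∂μ = C i j := by
    intro i j
    rw [MeasureTheory.integral_const_mul,
      MeasureTheory.integral_finset_sum _ (fun m _ => hint m i j)]
    simp_rw [hcov]
    rw [Finset.sum_const, Finset.card_univ, Fintype.card_fin, nsmul_eq_mul]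
    field_simp
  constructor
  · intro l
    have hdisj : ∀ i ∈ uniqueSet A l, ∀ j ∈ (uniqueSet A l).erase i,
        C i j = Sig l l := by
      intro i hi j hj
      exact hCval hi (Finset.mem_of_mem_erase hj) (fun h => (Finset.mem_erase.mp hj).1 h.symm)
    rw [MeasureTheory.integral_const_mul,
      MeasureTheory.integral_finset_sum _
        (fun i _ => integrable_finset_sum _ (fun j _ => hint2 i j))]
    have : ∀ i ∈ uniqueSet A l,
        ∫ ω, ∑ j ∈ (uniqueSet A l).erase i, ((n : ℝ)⁻¹ * ∑ m, z m ω i * z m ω j) ∂μ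
          = ((uniqueSet A l).card - 1 : ℝ) * Sig l l := by
      intro i hi
      rw [MeasureTheory.integral_finset_sum _ (fun j _ => hint2 i j)]
      rw [Finset.sum_congr rfl (fun j hj => (inner i j).trans (hdisj i hi j hj))]
      rw [Finset.sum_const, nsmul_eq_mul, Finset.card_erase_of_mem hi]
      have h2 := hUVC l
      have : (1 : ℕ) ≤ (uniqueSet A l).card := le_trans (by norm_num) h2
      rw [Nat.cast_sub this]
      norm_num
    rw [Finset.sum_congr rfl this, Finset.sum_const, nsmul_eq_mul]
    have hcard : (2 : ℝ) ≤ ((uniqueSet A l).card : ℝ) := by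
      exact_mod_cast hUVC l
    have h1 : ((uniqueSet A l).card : ℝ) ≠ 0 := by linarith
    have h2 : ((uniqueSet A l).card : ℝ) - 1 ≠ 0 := by linarith
    field_simp
  · intro l k hlk
    have hne : ∀ i ∈ uniqueSet A l, ∀ j ∈ uniqueSet A k, i ≠ j := by
      intro i hi j hj h
      subst h
      have h1 := hmemA hi l
      have h2 := hmemA hj l
      rw [if_pos rfl] at h1
      rw [if_neg hlk] at h2
      rw [h1] at h2
      norm_num at h2
    rw [MeasureTheory.integral_const_mul,
      MeasureTheory.integral_finset_sum _
        (fun i _ => integrable_finset_sum _ (fun j _ => hint2 i j))]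
    have : ∀ i ∈ uniqueSet A l,
        ∫ ω, ∑ j ∈ uniqueSet A k, ((n : ℝ)⁻¹ * ∑ m, z m ω i * z m ω j) ∂μ
          = ((uniqueSet A k).card : ℝ) * Sig l k := by
      intro i hi
      rw [MeasureTheory.integral_finset_sum _ (fun j _ => hint2 i j)]
      rw [Finset.sum_congr rfl
        (fun j hj => (inner i j).trans (hCval hi hj (hne i hi j hj)))]
      rw [Finset.sum_const, nsmul_eq_mul]
    rw [Finset.sum_congr rfl this, Finset.sum_const, nsmul_eq_mul]
    have hcl : (2 : ℝ) ≤ ((uniqueSet A l).card : ℝ) := by exact_mod_cast hUVC l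
    have hck : (2 : ℝ) ≤ ((uniqueSet A k).card : ℝ) := by exact_mod_cast hUVC k
    have h1 : ((uniqueSet A l).card : ℝ) ≠ 0 := by linarith
    have h2 : ((uniqueSet A k).card : ℝ) ≠ 0 := by linarith
    field_simp
end
end

section
/- (Risk decomposition of the shrinkage estimator.) Let Σ = (σ_{lk}) be a deterministic p×p symmetric real matrix and let Σ̂ = (σ̂_{lk}) be a random p×p symmetric matrix on a probability space whose entries are square-integrable and unbiased: E[σ̂_{lk}] = σ_{lk} for all l,k. Define α² = E‖Σ − diag(Σ̂)‖_F², β² = Σ_{l=1}^p E(σ̂_{ll} − σ_{ll})², and γ² = E‖Σ̂ − Σ‖_F². Then for every ρ ∈ ℝ, E‖ρ diag(Σ̂) + (1−ρ) Σ̂ − Σ‖_F² = ρ² α² + 2ρ(1−ρ) β² + (1−ρ)² γ². -/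
open Matrix MeasureTheory

noncomputable section

/-- risk decomposition of the shrinkage estimator: for a deterministic
symmetric `Σ` and a random symmetric, square-integrable, unbiased estimator `Σ̂`, with
`α² = E‖Σ - diag(Σ̂)‖_F²`, `β² = ∑_l E(σ̂_{ll} - σ_{ll})²`, `γ² = E‖Σ̂ - Σ‖_F²`,
we have `E‖ρ diag(Σ̂) + (1-ρ) Σ̂ - Σ‖_F² = ρ²α² + 2ρ(1-ρ)β² + (1-ρ)²γ²` for all `ρ`. -/
theorem stmt9 {Ω : Type*} [MeasurableSpace Ω] (μ : Measure Ω) [IsProbabilityMeasure μ]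
    {p : ℕ} (Sig : Matrix (Fin p) (Fin p) ℝ) (hSig : Sig.IsSymm)
    (Shat : Ω → Matrix (Fin p) (Fin p) ℝ)
    (hsymm : ∀ ω, (Shat ω).IsSymm)
    (hL2 : ∀ l k, MemLp (fun ω => Shat ω l k) 2 μ)
    (hunbiased : ∀ l k, ∫ ω, Shat ω l k ∂μ = Sig l k)
    (α2 β2 γ2 : ℝ)
    (hα : α2 = ∫ ω, ∑ i, ∑ j, ((Sig - Matrix.diagonal fun t => Shat ω t t) i j) ^ 2 ∂μ)
    (hβ : β2 = ∑ l, ∫ ω, (Shat ω l l - Sig l l) ^ 2 ∂μ)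
    (hγ : γ2 = ∫ ω, ∑ i, ∑ j, (Shat ω i j - Sig i j) ^ 2 ∂μ) :
    ∀ ρ : ℝ,
      ∫ ω, ∑ i, ∑ j,
          ((ρ • Matrix.diagonal (fun t => Shat ω t t) + (1 - ρ) • Shat ω - Sig) i j) ^ 2 ∂μ
        = ρ ^ 2 * α2 + 2 * ρ * (1 - ρ) * β2 + (1 - ρ) ^ 2 * γ2 := by
  intro ρ
  -- abbreviations
  have hX : ∀ i j : Fin p, MemLp (fun ω => Shat ω i j - Sig i j) 2 μ :=
    fun i j => (hL2 i j).sub (memLp_const _)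
  have hXsq : ∀ i j : Fin p, Integrable (fun ω => (Shat ω i j - Sig i j) ^ 2) μ :=
    fun i j => (hX i j).integrable_sq
  have hXint : ∀ i j : Fin p, Integrable (fun ω => Shat ω i j - Sig i j) μ :=
    fun i j => (hX i j).integrable (by norm_num)
  have hXzero : ∀ i j : Fin p, ∫ ω, (Shat ω i j - Sig i j) ∂μ = 0 := by
    intro i j
    rw [integral_sub ((hL2 i j).integrable (by norm_num)) (integrable_const _)]
    simp [hunbiased i j]
  -- the entry of Sig - diagonal
  have hYfun : ∀ i j : Fin p, (fun ω => ((Sig - Matrix.diagonal fun t => Shat ω t t) i j) ^ 2)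
      = fun ω => (if i = j then (Shat ω i i - Sig i i) ^ 2 else (Sig i j) ^ 2) := by
    intro i j
    funext ω
    by_cases h : i = j
    · subst h
      simp [Matrix.sub_apply]
      ring
    · simp [Matrix.sub_apply, Matrix.diagonal_apply_ne _ h, h]
  have hYsq : ∀ i j : Fin p, Integrable
      (fun ω => ((Sig - Matrix.diagonal fun t => Shat ω t t) i j) ^ 2) μ := by
    intro i j
    rw [hYfun i j]
    by_cases h : i = j
    · simpa [h] using hXsq i i
    · simpa [h] using integrable_const ((Sig i j) ^ 2)
  -- the entry of the shrinkage estimator minus Sig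
  have hEfun : ∀ i j : Fin p,
      (fun ω => ((ρ • Matrix.diagonal (fun t => Shat ω t t) + (1 - ρ) • Shat ω - Sig) i j) ^ 2)
      = fun ω => (if i = j then (Shat ω i i - Sig i i) ^ 2
          else ((1 - ρ) * (Shat ω i j - Sig i j) - ρ * Sig i j) ^ 2) := by
    intro i j
    funext ω
    by_cases h : i = j
    · subst h
      simp [Matrix.sub_apply, Matrix.add_apply, Matrix.smul_apply, smul_eq_mul]
      ring
    · simp [Matrix.sub_apply, Matrix.add_apply, Matrix.smul_apply, smul_eq_mul,
        Matrix.diagonal_apply_ne _ h, h]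
      ring
  have hEsq : ∀ i j : Fin p, Integrable
      (fun ω => ((ρ • Matrix.diagonal (fun t => Shat ω t t) + (1 - ρ) • Shat ω - Sig) i j) ^ 2)
      μ := by
    intro i j
    rw [hEfun i j]
    by_cases h : i = j
    · simpa [h] using hXsq i i
    · have : (fun ω => (if i = j then (Shat ω i i - Sig i i) ^ 2
          else ((1 - ρ) * (Shat ω i j - Sig i j) - ρ * Sig i j) ^ 2))
          = fun ω => (1 - ρ) ^ 2 * (Shat ω i j - Sig i j) ^ 2
            - (2 * ρ * (1 - ρ) * Sig i j) * (Shat ω i j - Sig i j) + ρ ^ 2 * (Sig i j) ^ 2 := by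
        funext ω; simp only [h, if_false]; ring
      rw [this]
      exact (((hXsq i j).const_mul _).sub ((hXint i j).const_mul _)).add (integrable_const _)
  -- the per-entry identity for the integrals
  have key : ∀ i j : Fin p,
      ∫ ω, ((ρ • Matrix.diagonal (fun t => Shat ω t t) + (1 - ρ) • Shat ω - Sig) i j) ^ 2 ∂μ
      = ρ ^ 2 * ∫ ω, ((Sig - Matrix.diagonal fun t => Shat ω t t) i j) ^ 2 ∂μ
        + 2 * ρ * (1 - ρ) * (if i = j then ∫ ω, (Shat ω i i - Sig i i) ^ 2 ∂μ else 0)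
        + (1 - ρ) ^ 2 * ∫ ω, (Shat ω i j - Sig i j) ^ 2 ∂μ := by
    intro i j
    rw [hEfun i j]
    conv_rhs => rw [hYfun i j]
    by_cases h : i = j
    · subst h
      simp only [eq_self_iff_true, if_true]
      ring
    · simp only [h, if_false]
      have h1 : (fun ω => ((1 - ρ) * (Shat ω i j - Sig i j) - ρ * Sig i j) ^ 2)
          = fun ω => ((1 - ρ) ^ 2 * (Shat ω i j - Sig i j) ^ 2
            - (2 * ρ * (1 - ρ) * Sig i j) * (Shat ω i j - Sig i j)) + ρ ^ 2 * (Sig i j) ^ 2 := by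
        funext ω; ring
      have hA : Integrable (fun ω => (1 - ρ) ^ 2 * (Shat ω i j - Sig i j) ^ 2) μ :=
        (hXsq i j).const_mul _
      have hB : Integrable
          (fun ω => (2 * ρ * (1 - ρ) * Sig i j) * (Shat ω i j - Sig i j)) μ :=
        (hXint i j).const_mul _
      have hAB : Integrable (fun ω => (1 - ρ) ^ 2 * (Shat ω i j - Sig i j) ^ 2
          - (2 * ρ * (1 - ρ) * Sig i j) * (Shat ω i j - Sig i j)) μ := hA.sub hB
      rw [h1, integral_add hAB (integrable_const _), integral_sub hA hB,
        integral_const_mul, integral_const_mul, hXzero i j]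
      simp
      ring
  calc
    ∫ ω, ∑ i, ∑ j,
        ((ρ • Matrix.diagonal (fun t => Shat ω t t) + (1 - ρ) • Shat ω - Sig) i j) ^ 2 ∂μ
      = ∑ i, ∑ j, ∫ ω,
        ((ρ • Matrix.diagonal (fun t => Shat ω t t) + (1 - ρ) • Shat ω - Sig) i j) ^ 2 ∂μ := by
        rw [integral_finset_sum _ fun i _ => integrable_finset_sum _ fun j _ => hEsq i j]
        exact Finset.sum_congr rfl fun i _ => integral_finset_sum _ fun j _ => hEsq i j
    _ = ∑ i, ∑ j, (ρ ^ 2 * ∫ ω, ((Sig - Matrix.diagonal fun t => Shat ω t t) i j) ^ 2 ∂μ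
        + 2 * ρ * (1 - ρ) * (if i = j then ∫ ω, (Shat ω i i - Sig i i) ^ 2 ∂μ else 0)
        + (1 - ρ) ^ 2 * ∫ ω, (Shat ω i j - Sig i j) ^ 2 ∂μ) := by
        exact Finset.sum_congr rfl fun i _ => Finset.sum_congr rfl fun j _ => key i j
    _ = ρ ^ 2 * α2 + 2 * ρ * (1 - ρ) * β2 + (1 - ρ) ^ 2 * γ2 := by
        have hαsum : α2 = ∑ i, ∑ j,
            ∫ ω, ((Sig - Matrix.diagonal fun t => Shat ω t t) i j) ^ 2 ∂μ := by
          rw [hα, integral_finset_sum _ fun i _ => integrable_finset_sum _ fun j _ => hYsq i j]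
          exact Finset.sum_congr rfl fun i _ => integral_finset_sum _ fun j _ => hYsq i j
        have hγsum : γ2 = ∑ i, ∑ j, ∫ ω, (Shat ω i j - Sig i j) ^ 2 ∂μ := by
          rw [hγ, integral_finset_sum _ fun i _ => integrable_finset_sum _ fun j _ => hXsq i j]
          exact Finset.sum_congr rfl fun i _ => integral_finset_sum _ fun j _ => hXsq i j
        rw [hαsum, hγsum, hβ]
        simp only [Finset.sum_add_distrib, ← Finset.mul_sum, Finset.sum_ite_eq,
          Finset.mem_univ, if_true]
end
end

section
/- (Strict risk improvement of the optimally shrunk estimator.) Let α², β², γ² be real numbers with β² ≥ 0, α² > β², γ² > β², and γ² > 0, define f(ρ) = ρ² α² + 2ρ(1−ρ) β² + (1−ρ)² γ², and let ρ* = (γ² − β²)/(α² + γ² − 2β²). Then f(ρ*)/γ² = (α²γ² − β⁴)/(α²γ² + γ⁴ − 2β²γ²), and this ratio is strictly less than 1. -/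
/-- strict risk improvement of the optimally shrunk estimator: with
`β² ≥ 0`, `α² > β²`, `γ² > β²`, `γ² > 0`, `f(ρ) = ρ²α² + 2ρ(1-ρ)β² + (1-ρ)²γ²`, and
`ρ* = (γ²-β²)/(α²+γ²-2β²)`, one has
`f(ρ*)/γ² = (α²γ² - β⁴)/(α²γ² + γ⁴ - 2β²γ²) < 1`. -/
theorem stmt13 (α2 β2 γ2 : ℝ) (hβ : 0 ≤ β2) (hαβ : β2 < α2) (hγβ : β2 < γ2)
    (hγ : 0 < γ2) :
    let f : ℝ → ℝ := fun ρ => ρ ^ 2 * α2 + 2 * ρ * (1 - ρ) * β2 + (1 - ρ) ^ 2 * γ2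
    let ρstar : ℝ := (γ2 - β2) / (α2 + γ2 - 2 * β2)
    f ρstar / γ2 = (α2 * γ2 - β2 ^ 2) / (α2 * γ2 + γ2 ^ 2 - 2 * β2 * γ2) ∧
      (α2 * γ2 - β2 ^ 2) / (α2 * γ2 + γ2 ^ 2 - 2 * β2 * γ2) < 1 := by
  intro f ρstar
  have hD : 0 < α2 + γ2 - 2 * β2 := by linarith
  have hDγ : 0 < α2 * γ2 + γ2 ^ 2 - 2 * β2 * γ2 := by nlinarith
  constructor
  · show (ρstar ^ 2 * α2 + 2 * ρstar * (1 - ρstar) * β2 + (1 - ρstar) ^ 2 * γ2) / γ2 =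
      (α2 * γ2 - β2 ^ 2) / (α2 * γ2 + γ2 ^ 2 - 2 * β2 * γ2)
    show (((γ2 - β2) / (α2 + γ2 - 2 * β2)) ^ 2 * α2 +
      2 * ((γ2 - β2) / (α2 + γ2 - 2 * β2)) * (1 - (γ2 - β2) / (α2 + γ2 - 2 * β2)) * β2 +
      (1 - (γ2 - β2) / (α2 + γ2 - 2 * β2)) ^ 2 * γ2) / γ2 = _
    rw [div_eq_div_iff hγ.ne' hDγ.ne']
    linear_combination γ2 * ((γ2 - β2) / (α2 + γ2 - 2 * β2) * (α2 + γ2 - 2 * β2) - (γ2 - β2)) * (div_mul_cancel₀ (γ2 - β2) hD.ne')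
  · rw [div_lt_one hDγ]
    nlinarith [sq_nonneg (γ2 - β2)]
end

section
/- (Covariance structure of the mean-of-unique-variables aggregates.) Let z be a random vector in ℝ^q following the latent factor model z = A x + ε, where A is a q×p binding matrix with entries in {0,1}, x is a random vector in ℝ^p with mean zero and covariance Σ = (σ_{lk}), and ε is a random vector in ℝ^q with mean zero, covariance Γ = diag(γ₁,…,γ_q), uncorrelated with x, and all entries square-integrable. For l ∈ {1,…,p}, let S_l = {j : the j-th row of A equals the l-th standard basis vector of ℝ^p}, assume |S_l| ≥ 1, and define the aggregate m_l = |S_l|^{-1} Σ_{j ∈ S_l} z_j. Then for all l ≠ k, Cov(m_l, m_k) = σ_{lk}, and for all l, Var(m_l) = σ_{ll} + |S_l|^{-2} Σ_{j ∈ S_l} γ_j. -/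
open Matrix Finset MeasureTheory

noncomputable section

lemma myIntMul {Ω : Type*} [MeasurableSpace Ω] {μ : Measure Ω} {f g : Ω → ℝ}
    (hf : MemLp f 2 μ) (hg : MemLp g 2 μ) :
    Integrable (fun ω => f ω * g ω) μ :=
  memLp_one_iff_integrable.mp (hg.smul hf (r := 1))

/-- covariance structure of the mean-of-unique-variables aggregates:
under the latent factor model `z = A x + ε` with mean-zero square-integrable `x`, `ε`,
`cov(x) = Σ`, `cov(ε) = diag(γ₁,…,γ_q)`, `x` uncorrelated with `ε`, and `|S_l| ≥ 1`,
the aggregates `m_l = |S_l|⁻¹ ∑_{j ∈ S_l} z_j` satisfy `Cov(m_l, m_k) = σ_{lk}` for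
`l ≠ k` and `Var(m_l) = σ_{ll} + |S_l|⁻² ∑_{j ∈ S_l} γ_j`. -/
theorem stmt15 {Ω : Type*} [MeasurableSpace Ω] (μ : Measure Ω) [IsProbabilityMeasure μ]
    {q p : ℕ} (A : Matrix (Fin q) (Fin p) ℝ) (hA : ∀ j k, A j k = 0 ∨ A j k = 1)
    (hcard : ∀ l, 1 ≤ (uniqueSet A l).card)
    (x : Ω → Fin p → ℝ) (ε : Ω → Fin q → ℝ)
    (Sig : Matrix (Fin p) (Fin p) ℝ) (hSig : Sig.IsSymm) (γ : Fin q → ℝ)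
    (hxL2 : ∀ l, MemLp (fun ω => x ω l) 2 μ)
    (hεL2 : ∀ j, MemLp (fun ω => ε ω j) 2 μ)
    (hx0 : ∀ l, ∫ ω, x ω l ∂μ = 0)
    (hε0 : ∀ j, ∫ ω, ε ω j ∂μ = 0)
    (hcovx : ∀ l k, ∫ ω, x ω l * x ω k ∂μ = Sig l k)
    (hcovε : ∀ i j, ∫ ω, ε ω i * ε ω j ∂μ = if i = j then γ i else 0)
    (huncorr : ∀ l j, ∫ ω, x ω l * ε ω j ∂μ = 0)
    (z : Ω → Fin q → ℝ) (hz : ∀ ω j, z ω j = (∑ k, A j k * x ω k) + ε ω j) :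
    let m : Fin p → Ω → ℝ :=
      fun l ω => ((uniqueSet A l).card : ℝ)⁻¹ * ∑ j ∈ uniqueSet A l, z ω j
    let cov : (Ω → ℝ) → (Ω → ℝ) → ℝ :=
      fun f g => ∫ ω, (f ω - ∫ ω', f ω' ∂μ) * (g ω - ∫ ω', g ω' ∂μ) ∂μ
    (∀ l k : Fin p, l ≠ k → cov (m l) (m k) = Sig l k) ∧
    (∀ l : Fin p,
      cov (m l) (m l) = Sig l l + (((uniqueSet A l).card : ℝ)⁻¹) ^ 2 *
        ∑ j ∈ uniqueSet A l, γ j) := by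
  classical
  intro m cov
  have hmem : ∀ l, ∀ j ∈ uniqueSet A l, ∀ k, A j k = if k = l then 1 else 0 := by
    intro l j hj k
    simp only [uniqueSet, Finset.mem_filter] at hj
    exact hj.2 k
  have hc : ∀ l, ((uniqueSet A l).card : ℝ) ≠ 0 := by
    intro l
    have := hcard l
    positivity
  have hzj : ∀ l, ∀ j ∈ uniqueSet A l, ∀ ω, z ω j = x ω l + ε ω j := by
    intro l j hj ω
    rw [hz]
    congr 1
    rw [Finset.sum_eq_single l]
    · rw [hmem l j hj l, if_pos rfl, one_mul]
    · intro k _ hk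
      rw [hmem l j hj k, if_neg hk, zero_mul]
    · simp
  -- auxiliary: a l ω
  set a : Fin p → Ω → ℝ :=
    fun l ω => ((uniqueSet A l).card : ℝ)⁻¹ * ∑ j ∈ uniqueSet A l, ε ω j with ha
  have hm : ∀ l ω, m l ω = x ω l + a l ω := by
    intro l ω
    show ((uniqueSet A l).card : ℝ)⁻¹ * ∑ j ∈ uniqueSet A l, z ω j = _
    simp only [ha]
    rw [Finset.sum_congr rfl (fun j hj => hzj l j hj ω), Finset.sum_add_distrib,
      Finset.sum_const, nsmul_eq_mul, mul_add, ← mul_assoc, inv_mul_cancel₀ (hc l), one_mul]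
  have haL2 : ∀ l, MemLp (a l) 2 μ := by
    intro l
    exact MemLp.const_mul (memLp_finset_sum (f := fun j ω => ε ω j) _ (fun j (_ : j ∈ uniqueSet A l) => hεL2 j)) _
  have haInt : ∀ l, Integrable (a l) μ := fun l => (haL2 l).integrable (by norm_num)
  have hxInt : ∀ l, Integrable (fun ω => x ω l) μ := fun l => (hxL2 l).integrable (by norm_num)
  have ha0 : ∀ l, ∫ ω, a l ω ∂μ = 0 := by
    intro l
    simp only [ha]
    rw [integral_const_mul, integral_finset_sum _ (fun j _ => (hεL2 j).integrable (by norm_num))]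
    simp [hε0]
  have hm0 : ∀ l, ∫ ω, m l ω ∂μ = 0 := by
    intro l
    have h1 : ∫ ω, m l ω ∂μ = ∫ ω, (x ω l + a l ω) ∂μ :=
      integral_congr_ae (Filter.Eventually.of_forall fun ω => hm l ω)
    rw [h1, integral_add (hxInt l) (haInt l), hx0, ha0, add_zero]
  -- integrals of cross terms
  have hxa : ∀ l k, ∫ ω, x ω l * a k ω ∂μ = 0 := by
    intro l k
    have h1 : ∀ ω, x ω l * a k ω =
        ((uniqueSet A k).card : ℝ)⁻¹ * ∑ j ∈ uniqueSet A k, x ω l * ε ω j := by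
      intro ω
      simp only [ha]
      rw [mul_left_comm, Finset.mul_sum]
    rw [integral_congr_ae (Filter.Eventually.of_forall h1), integral_const_mul,
      integral_finset_sum _ (fun j _ => myIntMul (hxL2 l) (hεL2 j))]
    simp [huncorr]
  have haa : ∀ l k, ∫ ω, a l ω * a k ω ∂μ =
      ((uniqueSet A l).card : ℝ)⁻¹ * ((uniqueSet A k).card : ℝ)⁻¹ *
        ∑ j ∈ uniqueSet A l, ∑ i ∈ uniqueSet A k, (if j = i then γ j else 0) := by
    intro l k
    have h1 : ∀ ω, a l ω * a k ω =
        ((uniqueSet A l).card : ℝ)⁻¹ * ((uniqueSet A k).card : ℝ)⁻¹ *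
          ∑ j ∈ uniqueSet A l, ∑ i ∈ uniqueSet A k, ε ω j * ε ω i := by
      intro ω
      simp only [ha]
      rw [mul_mul_mul_comm, Finset.sum_mul_sum]
    rw [integral_congr_ae (Filter.Eventually.of_forall h1), integral_const_mul,
      integral_finset_sum _ (fun j _ =>
        integrable_finset_sum _ (fun i _ => myIntMul (hεL2 j) (hεL2 i)))]
    congr 1
    refine Finset.sum_congr rfl fun j _ => ?_
    rw [integral_finset_sum _ (fun i _ => myIntMul (hεL2 j) (hεL2 i))]
    exact Finset.sum_congr rfl fun i _ => hcovε j i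
  -- key formula
  have key : ∀ l k, cov (m l) (m k) = Sig l k +
      ((uniqueSet A l).card : ℝ)⁻¹ * ((uniqueSet A k).card : ℝ)⁻¹ *
        ∑ j ∈ uniqueSet A l, ∑ i ∈ uniqueSet A k, (if j = i then γ j else 0) := by
    intro l k
    have hcv : cov (m l) (m k) = ∫ ω, m l ω * m k ω ∂μ := by
      show ∫ ω, (m l ω - ∫ ω', m l ω' ∂μ) * (m k ω - ∫ ω', m k ω' ∂μ) ∂μ = _
      simp only [hm0, sub_zero]
    have expand : ∀ ω, m l ω * m k ω =
        x ω l * x ω k + x ω l * a k ω + x ω k * a l ω + a l ω * a k ω := by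
      intro ω
      rw [hm, hm]
      ring
    rw [hcv, integral_congr_ae (Filter.Eventually.of_forall expand)]
    have I1 := myIntMul (hxL2 l) (hxL2 k)
    have I2 := myIntMul (hxL2 l) (haL2 k)
    have I3 := myIntMul (hxL2 k) (haL2 l)
    have I4 := myIntMul (haL2 l) (haL2 k)
    have I12 : Integrable (fun ω => x ω l * x ω k + x ω l * a k ω) μ := I1.add I2
    have I123 : Integrable
        (fun ω => x ω l * x ω k + x ω l * a k ω + x ω k * a l ω) μ := I12.add I3
    rw [integral_add I123 I4, integral_add I12 I3,
      integral_add I1 I2, hcovx, hxa, hxa, haa, add_zero, add_zero]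
  constructor
  · intro l k hlk
    rw [key]
    have hzero : ∑ j ∈ uniqueSet A l, ∑ i ∈ uniqueSet A k, (if j = i then γ j else 0) = 0 := by
      refine Finset.sum_eq_zero fun j hj => Finset.sum_eq_zero fun i hi => ?_
      rw [if_neg]
      intro hji
      subst hji
      have h1 := hmem l j hj k
      have h2 := hmem k j hi k
      rw [if_neg (Ne.symm hlk)] at h1
      rw [if_pos rfl] at h2
      rw [h1] at h2
      norm_num at h2
    rw [hzero, mul_zero, add_zero]
  · intro l
    rw [key]
    have hsum : ∑ j ∈ uniqueSet A l, ∑ i ∈ uniqueSet A l, (if j = i then γ j else 0) =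
        ∑ j ∈ uniqueSet A l, γ j := by
      refine Finset.sum_congr rfl fun j hj => ?_
      rw [Finset.sum_ite_eq]
      simp [hj]
    rw [hsum]
    ring
end
end

section
/- (Attenuation of MUV-based correlations.) Under the latent factor model z = A x + ε with E[x] = 0, cov(x) = Σ = (σ_{lk}), E[ε] = 0, cov(ε) = Γ = diag(γ₁,…,γ_q) with all γ_j ≥ 0, x uncorrelated with ε, and all entries square-integrable, let S_l = {j : the j-th row of A equals the l-th standard basis vector of ℝ^p}, assume |S_l| ≥ 1 and σ_{ll} > 0 for all l, and define m_l = |S_l|^{-1} Σ_{j ∈ S_l} z_j. Then for all l ≠ k, |Corr(m_l, m_k)| ≤ |r_{lk}|, where r_{lk} = σ_{lk}/√(σ_{ll} σ_{kk}); moreover, the inequality is strict whenever σ_{lk} ≠ 0 and Σ_{j ∈ S_l} γ_j > 0. -/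
open Matrix Finset MeasureTheory

noncomputable section

lemma int_mul {Ω : Type*} [MeasurableSpace Ω] {μ : Measure Ω} [IsFiniteMeasure μ]
    {f g : Ω → ℝ} (hf : MemLp f 2 μ) (hg : MemLp g 2 μ) :
    Integrable (fun ω => f ω * g ω) μ :=
  ((hg.smul hf (hpqr := ⟨by rw [ENNReal.inv_two_add_inv_two, inv_one]⟩)) :
    MemLp (f • g) 1 μ).integrable le_rfl

lemma attenuation_aux (a v w g h : ℝ) (hv : 0 < v) (hw : 0 < w) (hg : 0 ≤ g) (hh : 0 ≤ h) :
    |a / Real.sqrt ((v + g) * (w + h))| ≤ |a / Real.sqrt (v * w)| ∧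
    (a ≠ 0 → 0 < g → |a / Real.sqrt ((v + g) * (w + h))| < |a / Real.sqrt (v * w)|) := by
  have h1 : 0 < Real.sqrt (v * w) := Real.sqrt_pos.mpr (by positivity)
  have h2 : 0 < Real.sqrt ((v + g) * (w + h)) := Real.sqrt_pos.mpr (by positivity)
  have hle : Real.sqrt (v * w) ≤ Real.sqrt ((v + g) * (w + h)) :=
    Real.sqrt_le_sqrt (by nlinarith)
  rw [abs_div, abs_div, abs_of_pos h1, abs_of_pos h2]
  refine ⟨div_le_div_of_nonneg_left (abs_nonneg a) h1 hle, fun ha hg' => ?_⟩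
  have hlt : Real.sqrt (v * w) < Real.sqrt ((v + g) * (w + h)) :=
    Real.sqrt_lt_sqrt (by positivity) (by nlinarith)
  exact div_lt_div_of_pos_left (abs_pos.mpr ha) h1 hlt


/-- attenuation of MUV-based correlations: under the latent factor model
`z = A x + ε` with mean-zero square-integrable `x`, `ε`, `cov(x) = Σ` with `σ_{ll} > 0`,
`cov(ε) = diag(γ₁,…,γ_q)` with `γ_j ≥ 0`, `x` uncorrelated with `ε`, and `|S_l| ≥ 1`,
the MUV aggregates `m_l = |S_l|⁻¹ ∑_{j ∈ S_l} z_j` satisfy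
`|Corr(m_l, m_k)| ≤ |r_{lk}|` for `l ≠ k`, where `r_{lk} = σ_{lk}/√(σ_{ll}σ_{kk})`;
the inequality is strict whenever `σ_{lk} ≠ 0` and `∑_{j ∈ S_l} γ_j > 0`. -/
theorem stmt16 {Ω : Type*} [MeasurableSpace Ω] (μ : Measure Ω) [IsProbabilityMeasure μ]
    {q p : ℕ} (A : Matrix (Fin q) (Fin p) ℝ) (hA : ∀ j k, A j k = 0 ∨ A j k = 1)
    (hcard : ∀ l, 1 ≤ (uniqueSet A l).card)
    (x : Ω → Fin p → ℝ) (ε : Ω → Fin q → ℝ)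
    (Sig : Matrix (Fin p) (Fin p) ℝ) (hSig : Sig.IsSymm)
    (hpos : ∀ l, 0 < Sig l l)
    (γ : Fin q → ℝ) (hγ : ∀ j, 0 ≤ γ j)
    (hxL2 : ∀ l, MemLp (fun ω => x ω l) 2 μ)
    (hεL2 : ∀ j, MemLp (fun ω => ε ω j) 2 μ)
    (hx0 : ∀ l, ∫ ω, x ω l ∂μ = 0)
    (hε0 : ∀ j, ∫ ω, ε ω j ∂μ = 0)
    (hcovx : ∀ l k, ∫ ω, x ω l * x ω k ∂μ = Sig l k)
    (hcovε : ∀ i j, ∫ ω, ε ω i * ε ω j ∂μ = if i = j then γ i else 0)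
    (huncorr : ∀ l j, ∫ ω, x ω l * ε ω j ∂μ = 0)
    (z : Ω → Fin q → ℝ) (hz : ∀ ω j, z ω j = (∑ k, A j k * x ω k) + ε ω j) :
    let m : Fin p → Ω → ℝ :=
      fun l ω => ((uniqueSet A l).card : ℝ)⁻¹ * ∑ j ∈ uniqueSet A l, z ω j
    let cov : (Ω → ℝ) → (Ω → ℝ) → ℝ :=
      fun f g => ∫ ω, (f ω - ∫ ω', f ω' ∂μ) * (g ω - ∫ ω', g ω' ∂μ) ∂μ
    ∀ l k : Fin p, l ≠ k →
      (|cov (m l) (m k) / Real.sqrt (cov (m l) (m l) * cov (m k) (m k))| ≤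
        |Sig l k / Real.sqrt (Sig l l * Sig k k)|) ∧
      (Sig l k ≠ 0 → 0 < ∑ j ∈ uniqueSet A l, γ j →
        |cov (m l) (m k) / Real.sqrt (cov (m l) (m l) * cov (m k) (m k))| <
          |Sig l k / Real.sqrt (Sig l l * Sig k k)|) := by
  intro m cov l k hlk
  classical
  have hrow : ∀ (l' : Fin p) (j : Fin q), j ∈ uniqueSet A l' →
      ∀ k', A j k' = if k' = l' then 1 else 0 := by
    intro l' j hj k'
    have h := Finset.mem_filter.mp hj
    exact h.2 k'
  have hnpos : ∀ l' : Fin p, (0:ℝ) < ((uniqueSet A l').card : ℝ) := by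
    intro l'
    exact_mod_cast Nat.lt_of_lt_of_le Nat.zero_lt_one (hcard l')
  have hn : ∀ l' : Fin p, ((uniqueSet A l').card : ℝ) ≠ 0 := fun l' => (hnpos l').ne'
  set c : Fin p → ℝ := fun l' => ((uniqueSet A l').card : ℝ)⁻¹ with hc
  set E : Fin p → Ω → ℝ := fun l' ω => ∑ j ∈ uniqueSet A l', ε ω j with hEdef
  have hm : ∀ (l' : Fin p) (ω : Ω), m l' ω = x ω l' + c l' * E l' ω := by
    intro l' ω
    have h1 : ∀ j ∈ uniqueSet A l', z ω j = x ω l' + ε ω j := by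
      intro j hj
      rw [hz]
      congr 1
      rw [Finset.sum_congr rfl (fun k' _ => by rw [hrow l' j hj k'])]
      simp
    simp only [m]
    rw [Finset.sum_congr rfl h1, Finset.sum_add_distrib, Finset.sum_const, nsmul_eq_mul,
      mul_add, ← mul_assoc]
    simp only [hc, hEdef]
    rw [inv_mul_cancel₀ (hn l'), one_mul]
  have hEL2 : ∀ l', MemLp (E l') 2 μ := by
    intro l'
    have := memLp_finset_sum' (μ := μ) (p := 2) (uniqueSet A l')
      (f := fun j ω => ε ω j) (fun j _ => hεL2 j)
    convert this using 1
    funext ω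
    simp [hEdef]
  have hmean : ∀ l', ∫ ω, m l' ω ∂μ = 0 := by
    intro l'
    have heq : (fun ω => m l' ω) = fun ω => x ω l' + c l' * E l' ω := funext (hm l')
    rw [heq, integral_add ((hxL2 l').integrable one_le_two)
      (((hEL2 l').integrable one_le_two).const_mul _), hx0, integral_const_mul]
    simp only [hEdef]
    rw [integral_finset_sum _ (fun j _ => (hεL2 j).integrable one_le_two)]
    simp [hε0]
  have hcovmm : ∀ l' k' : Fin p, cov (m l') (m k') = ∫ ω, m l' ω * m k' ω ∂μ := by
    intro l' k'
    simp only [cov, hmean, sub_zero]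
  have hxE : ∀ (l' k' : Fin p), ∫ ω, x ω l' * E k' ω ∂μ = 0 := by
    intro l' k'
    have heq : (fun ω => x ω l' * E k' ω) = fun ω => ∑ j ∈ uniqueSet A k', x ω l' * ε ω j := by
      funext ω; simp [hEdef, Finset.mul_sum]
    rw [heq, integral_finset_sum _ (fun j _ => int_mul (hxL2 l') (hεL2 j))]
    simp [huncorr]
  have hEE : ∀ (l' k' : Fin p), ∫ ω, E l' ω * E k' ω ∂μ
      = ∑ i ∈ uniqueSet A l', ∑ j ∈ uniqueSet A k', (if i = j then γ i else 0) := by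
    intro l' k'
    have heq : (fun ω => E l' ω * E k' ω)
        = fun ω => ∑ i ∈ uniqueSet A l', ∑ j ∈ uniqueSet A k', ε ω i * ε ω j := by
      funext ω; simp only [hEdef]; rw [Finset.sum_mul_sum]
    rw [heq, integral_finset_sum _ (fun i _ =>
      integrable_finset_sum _ (fun j _ => int_mul (hεL2 i) (hεL2 j)))]
    refine Finset.sum_congr rfl fun i _ => ?_
    rw [integral_finset_sum _ (fun j _ => int_mul (hεL2 i) (hεL2 j))]
    exact Finset.sum_congr rfl fun j _ => hcovε i j
  have hint : ∀ l' k', ∫ ω, m l' ω * m k' ω ∂μ = Sig l' k' +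
      c l' * c k' * ∑ i ∈ uniqueSet A l', ∑ j ∈ uniqueSet A k', (if i = j then γ i else 0) := by
    intro l' k'
    have hexp : (fun ω => m l' ω * m k' ω) = fun ω =>
        x ω l' * x ω k' + c k' * (x ω l' * E k' ω) + c l' * (x ω k' * E l' ω)
          + c l' * c k' * (E l' ω * E k' ω) := by
      funext ω; rw [hm, hm]; ring
    have I1 : Integrable (fun ω => x ω l' * x ω k') μ := int_mul (hxL2 l') (hxL2 k')
    have I2 : Integrable (fun ω => c k' * (x ω l' * E k' ω)) μ :=
      (int_mul (hxL2 l') (hEL2 k')).const_mul _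
    have I3 : Integrable (fun ω => c l' * (x ω k' * E l' ω)) μ :=
      (int_mul (hxL2 k') (hEL2 l')).const_mul _
    have I4 : Integrable (fun ω => c l' * c k' * (E l' ω * E k' ω)) μ :=
      (int_mul (hEL2 l') (hEL2 k')).const_mul _
    rw [hexp]
    rw [integral_add (by exact (I1.add I2).add I3) I4]
    rw [integral_add (by exact I1.add I2) I3]
    rw [integral_add I1 I2]
    rw [integral_const_mul, integral_const_mul, integral_const_mul, hcovx, hxE, hxE, hEE]
    ring
  have hdisj : Disjoint (uniqueSet A l) (uniqueSet A k) := by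
    rw [Finset.disjoint_left]
    intro j hjl hjk
    have h1 := hrow l j hjl l
    have h2 := hrow k j hjk l
    rw [if_pos rfl] at h1
    rw [if_neg hlk] at h2
    rw [h1] at h2
    exact one_ne_zero h2
  have hlk0 : ∑ i ∈ uniqueSet A l, ∑ j ∈ uniqueSet A k, (if i = j then γ i else 0) = 0 := by
    refine Finset.sum_eq_zero fun i hi => Finset.sum_eq_zero fun j hj => ?_
    have hij : i ≠ j := fun h => (Finset.disjoint_left.mp hdisj hi) (h ▸ hj)
    rw [if_neg hij]
  have hdiag : ∀ l', ∑ i ∈ uniqueSet A l', ∑ j ∈ uniqueSet A l', (if i = j then γ i else 0)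
      = ∑ i ∈ uniqueSet A l', γ i := by
    intro l'
    refine Finset.sum_congr rfl fun i hi => ?_
    rw [Finset.sum_ite_eq (uniqueSet A l') i (fun _ => γ i), if_pos hi]
  have hcovlk : cov (m l) (m k) = Sig l k := by
    rw [hcovmm, hint, hlk0]; ring
  have hcovll : ∀ l', cov (m l') (m l') = Sig l' l' + (c l')^2 * ∑ j ∈ uniqueSet A l', γ j := by
    intro l'
    rw [hcovmm, hint, hdiag]; ring
  have hG0 : 0 ≤ (c l)^2 * ∑ j ∈ uniqueSet A l, γ j := by
    have : 0 ≤ ∑ j ∈ uniqueSet A l, γ j := Finset.sum_nonneg fun j _ => hγ j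
    positivity
  have hH0 : 0 ≤ (c k)^2 * ∑ j ∈ uniqueSet A k, γ j := by
    have : 0 ≤ ∑ j ∈ uniqueSet A k, γ j := Finset.sum_nonneg fun j _ => hγ j
    positivity
  have haux := attenuation_aux (Sig l k) (Sig l l) (Sig k k)
    ((c l)^2 * ∑ j ∈ uniqueSet A l, γ j) ((c k)^2 * ∑ j ∈ uniqueSet A k, γ j)
    (hpos l) (hpos k) hG0 hH0
  rw [hcovlk, hcovll l, hcovll k]
  refine ⟨haux.1, fun ha hg => haux.2 ha ?_⟩
  have hcl : 0 < c l := by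
    simp only [hc]
    exact inv_pos.mpr (hnpos l)
  positivity
end
end
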